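/- arXiv:1210.3523 — 2 statements merged into one kernel-verified Lean document; each statement's English description precedes it below -/
import Mathlib

section
/- Let Δ ⊆ ℝⁿ be a compact polytope (the convex hull of finitely many points) and f : Δ → ℝ a nonnegative concave upper semicontinuous function. Then f is continuous on all of Δ, including the boundary. -/
open Filter Topology

/-- Howe's theorem: a nonnegative concave upper semicontinuous function on a
compact polytope (convex hull of finitely many points of `ℝⁿ`) is continuous
on the whole polytope, including its boundary. -/
theorem concaveOn_polytope_continuousOn {n : ℕ} (F : Finset (Fin n → ℝ))
    (Δ : Set (Fin n → ℝ)) (hΔ : Δ = convexHull ℝ (F : Set (Fin n → ℝ)))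
    (f : (Fin n → ℝ) → ℝ) (hnonneg : ∀ x ∈ Δ, 0 ≤ f x)
    (hconc : ConcaveOn ℝ Δ f) (husc : UpperSemicontinuousOn f Δ) :
    ContinuousOn f Δ := by
  classical
  set ι := {v : Fin n → ℝ // v ∈ F} with hι
  let φ : (ι → ℝ) → (Fin n → ℝ) := fun w => ∑ v : ι, w v • (v : Fin n → ℝ)
  have hφcont : Continuous φ :=
    continuous_finset_sum _ fun v _ => (continuous_apply v).smul continuous_const
  -- φ maps the standard simplex into Δ
  have hφmem : ∀ w ∈ stdSimplex ℝ ι, φ w ∈ Δ := by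
    intro w hw
    rw [hΔ]
    have h := Finset.centerMass_mem_convexHull (Finset.univ : Finset ι)
      (w := w) (z := fun v => (v : Fin n → ℝ)) (fun i _ => hw.1 i)
      (by rw [hw.2]; norm_num) (fun i _ => Finset.mem_coe.2 i.2)
    rwa [Finset.centerMass_eq_of_sum_1 _ _ (by simpa using hw.2)] at h
  -- every point of Δ is φ of a point of the simplex
  have hφsurj : ∀ y ∈ Δ, ∃ w ∈ stdSimplex ℝ ι, φ w = y := by
    intro y hy
    rw [hΔ, Finset.convexHull_eq] at hy
    obtain ⟨w, hw₀, hw₁, hwy⟩ := hy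
    refine ⟨fun v => w v, ⟨fun v => hw₀ v v.2, ?_⟩, ?_⟩
    · rw [Finset.sum_coe_sort F w, hw₁]
    · rw [Finset.centerMass_eq_of_sum_1 _ _ hw₁] at hwy
      rw [← hwy]
      exact Finset.sum_coe_sort F (fun v => w v • id v)
  intro x hx
  rw [ContinuousWithinAt, tendsto_order]
  refine ⟨?_, fun c hc => (husc x hx) c hc⟩
  intro c hc
  by_contra hcon
  have hfreq : ∃ᶠ y in 𝓝[Δ] x, f y ≤ c := by
    simpa [not_eventually, not_lt] using hcon
  have hclos : x ∈ closure {y | f y ≤ c ∧ y ∈ Δ} :=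
    mem_closure_iff_frequently.2 (frequently_nhdsWithin_iff.1 hfreq)
  obtain ⟨y, hy, hytend⟩ := mem_closure_iff_seq_limit.1 hclos
  choose w hwmem hwφ using fun k => hφsurj (y k) (hy k).2
  obtain ⟨lam, hlam, σ, hσ, hσtend⟩ := (isCompact_stdSimplex ℝ ι).tendsto_subseq hwmem
  have hφlam : φ lam = x := by
    have h1 : Tendsto (fun j => φ (w (σ j))) atTop (𝓝 (φ lam)) :=
      (hφcont.tendsto lam).comp hσtend
    have h2 : Tendsto (fun j => φ (w (σ j))) atTop (𝓝 x) := by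
      simp only [hwφ]
      exact hytend.comp hσ.tendsto_atTop
    exact tendsto_nhds_unique h1 h2
  have hfx : 0 ≤ f x := hnonneg x hx
  set θ : ℝ := min (1/2) ((f x - c) / (2 * (f x + 1))) with hθ
  have hθpos : 0 < θ :=
    lt_min (by norm_num) (div_pos (by linarith) (by positivity))
  have hθle : θ ≤ 1/2 := min_le_left _ _
  have hθkey : c < (1 - θ) * f x := by
    have h1 : θ ≤ (f x - c) / (2 * (f x + 1)) := min_le_right _ _
    have h2 : θ * (2 * (f x + 1)) ≤ f x - c := (le_div_iff₀ (by positivity)).mp h1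
    nlinarith
  -- eventually the coefficients dominate (1-θ) * lam
  have hev : ∀ᶠ j in atTop, ∀ v : ι, (1 - θ) * lam v ≤ w (σ j) v := by
    rw [eventually_all]
    intro v
    rcases eq_or_lt_of_le (hlam.1 v) with h0 | h0
    · filter_upwards with j
      rw [← h0, mul_zero]
      exact (hwmem (σ j)).1 v
    · have hlt : (1 - θ) * lam v < lam v := by nlinarith
      have htv : Tendsto (fun j => w (σ j) v) atTop (𝓝 (lam v)) :=
        (tendsto_pi_nhds.1 hσtend) v
      exact htv.eventually (eventually_ge_nhds hlt)
  obtain ⟨j, hj⟩ := hev.exists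
  set w' : ι → ℝ := w (σ j) with hw'
  set u : ι → ℝ := fun v => (w' v - (1 - θ) * lam v) / θ with hu
  have hu0 : ∀ v, 0 ≤ u v := fun v => div_nonneg (sub_nonneg.2 (hj v)) hθpos.le
  have hu1 : ∑ v : ι, u v = 1 := by
    simp only [hu, ← Finset.sum_div, Finset.sum_sub_distrib, ← Finset.mul_sum]
    rw [(hwmem (σ j)).2, hlam.2]
    field_simp
    ring
  have hz : φ u ∈ Δ := hφmem u ⟨hu0, hu1⟩
  have hkey : (1 - θ) • x + θ • φ u = y (σ j) := by
    rw [← hφlam, ← hwφ (σ j)]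
    simp only [φ, Finset.smul_sum, smul_smul, ← Finset.sum_add_distrib]
    refine Finset.sum_congr rfl fun v _ => ?_
    rw [← add_smul]
    congr 1
    rw [hu]
    field_simp
    rw [hw']
    ring
  have hcc := hconc.2 hx hz (by linarith : (0:ℝ) ≤ 1 - θ) hθpos.le (by ring)
  rw [hkey] at hcc
  have hfz : 0 ≤ f (φ u) := hnonneg _ hz
  have hfyle : f (y (σ j)) ≤ c := (hy (σ j)).1
  have : (1 - θ) * f x ≤ f (y (σ j)) := by
    have := hcc
    simp only [smul_eq_mul] at this
    nlinarith
  linarith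
end

section
/- Let X be a smooth projective curve, p ∈ X, L a line bundle of positive degree d. Then d belongs to the set of normalized vanishing orders { ord_p(s)/m : 0 ≠ s ∈ H⁰(L^{⊗m}) } if and only if the degree-zero line bundle L ⊗ O_X(-d·p) is a torsion element of Pic⁰(X). -/
/-- On a smooth projective curve (encoded via its function field `K`, its
points `P` and the normalized geometric valuations `ord q` as in the product
formula model), for a line bundle given by a divisor `D : P →₀ ℤ` of degree
`d > 0` and a point `p`, the number `d` is a normalized vanishing order
(`d = ord_p(s)/m` for some nonzero section `s` of `L^{⊗m}`) if and only if the
degree-zero bundle `L ⊗ O(-d·p)`, i.e. the divisor class of `D - d·p`, is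
torsion in `Pic⁰`: some positive multiple `m·(D - d·p)` is principal. -/
theorem degree_is_vanishing_order_iff_torsion
    {K : Type} [Field K] [Algebra ℂ K] {P : Type} [DecidableEq P]
    (ord : P → K → ℤ)
    (hord_mul : ∀ (q : P) (f g : K), f ≠ 0 → g ≠ 0 →
      ord q (f * g) = ord q f + ord q g)
    (hconst : ∀ c : ℂ, c ≠ 0 → ∀ q : P, ord q (algebraMap ℂ K c) = 0)
    (hsurj : ∀ q : P, ∃ f : K, f ≠ 0 ∧ ord q f = 1)
    (hfin : ∀ f : K, f ≠ 0 → (Function.support fun q => ord q f).Finite)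
    (hdeg0 : ∀ f : K, f ≠ 0 → (finsum fun q => ord q f) = 0)
    (D : P →₀ ℤ) (p : P) (d : ℤ)
    (hd : d = D.sum fun _ n => n) (hdpos : 0 < d) :
    (∃ m : ℕ, 1 ≤ m ∧ ∃ f : K, f ≠ 0 ∧
        (∀ q : P, 0 ≤ ord q f + (m : ℤ) * D q) ∧
        ord p f + (m : ℤ) * D p = (m : ℤ) * d) ↔
    (∃ m : ℕ, 1 ≤ m ∧ ∃ f : K, f ≠ 0 ∧
        ∀ q : P, ord q f = (m : ℤ) * ((if q = p then d else 0) - D q)) := by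
  constructor
  · rintro ⟨m, hm, f, hf, hge, hp⟩
    refine ⟨m, hm, f, hf, ?_⟩
    set E : P → ℤ := fun q => ord q f + (m : ℤ) * D q with hE
    have hsub : Function.support E ⊆
        (Function.support fun q => ord q f) ∪ Function.support ⇑D := by
      intro q hq
      by_contra h
      simp only [Set.mem_union, Function.mem_support, not_or, not_not] at h
      apply hq
      simp [hE, h.1, h.2]
    have hEfin : (Function.support E).Finite :=
      Set.Finite.subset ((hfin f hf).union D.finite_support) hsub
    have hDfin : (Function.support fun q => (m : ℤ) * D q).Finite := by
      apply Set.Finite.subset D.finite_support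
      intro q hq
      simp only [Function.mem_support] at hq ⊢
      intro h0
      exact hq (by simp [h0])
    have hsumD : (finsum fun q => (m : ℤ) * D q) = (m : ℤ) * d := by
      rw [← mul_finsum _ _]
      congr 1
      rw [hd]
      rw [finsum_eq_finset_sum_of_support_subset _ (s := D.support)
        (by intro q hq; simpa using hq)]
      rfl
    have hsumE : (finsum E) = (m : ℤ) * d := by
      have := finsum_add_distrib (hfin f hf) hDfin
      simp only [hE]
      rw [this, hdeg0 f hf, hsumD, zero_add]
    -- finite sum over support
    have hsumE' : ∑ q ∈ hEfin.toFinset, E q = (m : ℤ) * d := by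
      rw [← hsumE]
      exact (finsum_eq_finset_sum_of_support_subset _
        (by intro q hq; simpa using hq)).symm
    have hEp : E p = (m : ℤ) * d := hp
    have hmdpos : 0 < (m : ℤ) * d :=
      mul_pos (by exact_mod_cast hm) hdpos
    have hpmem : p ∈ hEfin.toFinset := by
      simp only [Set.Finite.mem_toFinset, Function.mem_support, hEp]
      exact hmdpos.ne'
    have hrest : ∑ q ∈ hEfin.toFinset.erase p, E q = 0 := by
      have := Finset.add_sum_erase _ E hpmem
      omega
    have hzero : ∀ q ∈ hEfin.toFinset.erase p, E q = 0 := by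
      rw [← Finset.sum_eq_zero_iff_of_nonneg]
      · exact hrest
      · intro q _; exact hge q
    intro q
    by_cases hq : q = p
    · subst hq
      have : E q = (m : ℤ) * d := hEp
      simp only [hE] at this
      rw [if_pos rfl, mul_sub]
      linarith [this]
    · have hEq0 : E q = 0 := by
        by_cases hmem : q ∈ hEfin.toFinset
        · exact hzero q (Finset.mem_erase.mpr ⟨hq, hmem⟩)
        · simp only [Set.Finite.mem_toFinset, Function.mem_support,
            not_not] at hmem
          exact hmem
      simp only [hE] at hEq0
      rw [if_neg hq, zero_sub, mul_neg]
      linarith [hEq0]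
  · rintro ⟨m, hm, f, hf, h⟩
    refine ⟨m, hm, f, hf, fun q => ?_, ?_⟩
    · rw [h q]
      by_cases hq : q = p
      · simp only [if_pos hq]
        nlinarith [Int.ofNat_le.mpr hm]
      · simp [if_neg hq]
    · rw [h p]
      rw [if_pos rfl]
      ring
end
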